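/- Let Γ be a weighted zero-sum population network game with weights (ω_i)_{i∈V} and β > 0, let L(μ) = Σ_{i∈V} ω_i·[π_i(BR_i(μ), μ) − π_i(μ_i, μ)], and let μ : [0,∞) → Δ be a solution of the homogeneous belief dynamics μ'(τ) = BR(μ(τ)) − μ(τ) remaining in the interior of Δ. Then for every τ ≥ 0, writing x_i = BR_i(μ(τ)), the derivative satisfies d/dτ L(μ(τ)) = −(1/β)·Σ_{i∈V} ω_i Σ_{s∈S_i} (ln x_i(s) − ln μ_i(τ)(s))·(x_i(s) − μ_i(τ)(s)) ≤ 0, with equality if and only if BR_i(μ(τ)) = μ_i(τ) for all i ∈ V; in particular τ ↦ L(μ(τ)) is nonincreasing. -/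

import Mathlib

open Real Filter

/-- Membership in the standard probability simplex on a finite set `S`. -/
def inSimplex {S : Type*} [Fintype S] (x : S → ℝ) : Prop :=
  (∀ s, 0 ≤ x s) ∧ ∑ s, x s = 1

/-- Membership in the product of simplices `Δ = ∏ i, Δ_i`. -/
def inProd {V : Type*} [Fintype V] {S : V → Type*} [∀ i, Fintype (S i)]
    (μ : ∀ i, S i → ℝ) : Prop :=
  ∀ i, inSimplex (μ i)

/-- Payoff to population `i` of pure strategy `s` given beliefs `μ`. -/
def payoffTo {V : Type*} [Fintype V] {S : V → Type*} [∀ i, Fintype (S i)]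
    (E : V → V → Prop) [DecidableRel E] (A : ∀ i j, S i → S j → ℝ)
    (μ : ∀ i, S i → ℝ) (i : V) (s : S i) : ℝ :=
  ∑ j, if E i j then ∑ s' : S j, A i j s s' * μ j s' else 0

/-- Logit best response of population `i` to beliefs `μ`, rationality `β`. -/
noncomputable def BR {V : Type*} [Fintype V] {S : V → Type*} [∀ i, Fintype (S i)]
    (E : V → V → Prop) [DecidableRel E] (A : ∀ i j, S i → S j → ℝ) (β : ℝ)
    (μ : ∀ i, S i → ℝ) (i : V) (s : S i) : ℝ :=
  Real.exp (β * payoffTo E A μ i s) / ∑ s' : S i, Real.exp (β * payoffTo E A μ i s')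

/-- Quantal response equilibrium. -/
def isQRE {V : Type*} [Fintype V] {S : V → Type*} [∀ i, Fintype (S i)]
    (E : V → V → Prop) [DecidableRel E] (A : ∀ i j, S i → S j → ℝ) (β : ℝ)
    (x : ∀ i, S i → ℝ) : Prop :=
  inProd x ∧ ∀ i, x i = BR E A β x i

/-- The bilinear form `x_iᵀ A_{ij} y_j`. -/
def bilin {V : Type*} {S : V → Type*} [∀ i, Fintype (S i)]
    (A : ∀ i j, S i → S j → ℝ) (x y : ∀ i, S i → ℝ) (i j : V) : ℝ :=
  ∑ s : S i, ∑ s' : S j, x i s * A i j s s' * y j s'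

/-- The game is weighted zero-sum with weights `ω`. -/
def weightedZeroSum {V : Type*} [Fintype V] {S : V → Type*} [∀ i, Fintype (S i)]
    (E : V → V → Prop) [DecidableRel E] (A : ∀ i j, S i → S j → ℝ)
    (ω : V → ℝ) : Prop :=
  ∀ x, inProd x → ∑ i, ω i * ∑ j, (if E i j then bilin A x x i j else 0) = 0

/-- Entropy perturbation `v_β(x) = -(1/β) Σ_s x s · ln (x s)` (`Real.log 0 = 0`). -/
noncomputable def vEnt {S : Type*} [Fintype S] (β : ℝ) (x : S → ℝ) : ℝ :=
  -(1 / β) * ∑ s, x s * Real.log (x s)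

/-- Perturbed payoff `π_i(x_i, μ)`. -/
noncomputable def pPay {V : Type*} [Fintype V] {S : V → Type*} [∀ i, Fintype (S i)]
    (E : V → V → Prop) [DecidableRel E] (A : ∀ i j, S i → S j → ℝ) (β : ℝ)
    (μ : ∀ i, S i → ℝ) (i : V) (xi : S i → ℝ) : ℝ :=
  (∑ j, if E i j then ∑ s : S i, ∑ s' : S j, xi s * A i j s s' * μ j s' else 0)
    + vEnt β xi

/-- Second partial derivative of `μ ↦ BR_i(μ)(s)` (on the ambient space) in the
coordinate `(j, s')`, evaluated at `μ`. -/
noncomputable def secondPartialBR {V : Type*} [Fintype V] [DecidableEq V]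
    {S : V → Type*} [∀ i, Fintype (S i)] [∀ i, DecidableEq (S i)]
    (E : V → V → Prop) [DecidableRel E] (A : ∀ i j, S i → S j → ℝ) (β : ℝ)
    (μ : ∀ i, S i → ℝ) (i : V) (s : S i) (j : V) (s' : S j) : ℝ :=
  iteratedDeriv 2 (fun r : ℝ =>
    BR E A β (fun k => μ k + r • Pi.single (M := fun k => S k → ℝ) j (Pi.single s' (1 : ℝ)) k) i s) 0

/-- The `(i,s)`-component of the time-reparameterized mean-belief vector field of an
initially heterogeneous system with initial belief variances `σ2`. -/
noncomputable def heteroField {V : Type*} [Fintype V] [DecidableEq V]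
    {S : V → Type*} [∀ i, Fintype (S i)] [∀ i, DecidableEq (S i)]
    (E : V → V → Prop) [DecidableRel E] (A : ∀ i j, S i → S j → ℝ) (β : ℝ)
    (σ2 : ∀ j, S j → ℝ) (τ : ℝ) (μ : ∀ i, S i → ℝ) (i : V) (s : S i) : ℝ :=
  BR E A β μ i s - μ i s + (1 / 2) * Real.exp (-2 * τ) *
    ∑ j, if E i j then
      ∑ s' : S j, σ2 j s' * secondPartialBR E A β μ i s j s' else 0


section AuxLemmas

variable {V : Type*} [Fintype V] {S : V → Type*} [∀ i, Fintype (S i)]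
  (E : V → V → Prop) [DecidableRel E] (A : ∀ i j, S i → S j → ℝ) (β : ℝ)

lemma aux_Zpos (μ : ∀ i, S i → ℝ) (i : V) [Nonempty (S i)] :
    0 < ∑ s' : S i, Real.exp (β * payoffTo E A μ i s') :=
  Finset.sum_pos (fun _ _ => Real.exp_pos _) Finset.univ_nonempty

lemma aux_BRpos (μ : ∀ i, S i → ℝ) (i : V) [Nonempty (S i)] (s : S i) :
    0 < BR E A β μ i s :=
  div_pos (Real.exp_pos _) (aux_Zpos E A β μ i)

lemma aux_BRsum (μ : ∀ i, S i → ℝ) (i : V) [Nonempty (S i)] :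
    ∑ s, BR E A β μ i s = 1 := by
  unfold BR
  rw [← Finset.sum_div, div_self (aux_Zpos E A β μ i).ne']

lemma aux_logBR (μ : ∀ i, S i → ℝ) (i : V) [Nonempty (S i)] (s : S i) :
    Real.log (BR E A β μ i s)
      = β * payoffTo E A μ i s
        - Real.log (∑ s' : S i, Real.exp (β * payoffTo E A μ i s')) := by
  unfold BR
  rw [Real.log_div (Real.exp_pos _).ne' (aux_Zpos E A β μ i).ne', Real.log_exp]

lemma aux_swap (x y : ∀ i, S i → ℝ) (i : V) :
    (∑ j, if E i j then ∑ s : S i, ∑ s' : S j, x i s * A i j s s' * y j s' else 0)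
      = ∑ s : S i, x i s * payoffTo E A y i s := by
  unfold payoffTo
  have h1 : ∀ j, (if E i j then ∑ s : S i, ∑ s' : S j, x i s * A i j s s' * y j s' else 0)
      = ∑ s : S i, if E i j then ∑ s' : S j, x i s * A i j s s' * y j s' else 0 := by
    intro j; split_ifs <;> simp
  simp only [h1]
  rw [Finset.sum_comm]
  refine Finset.sum_congr rfl fun s _ => ?_
  rw [Finset.mul_sum]
  refine Finset.sum_congr rfl fun j _ => ?_
  split_ifs with h
  · rw [Finset.mul_sum]; exact Finset.sum_congr rfl fun s' _ => by ring
  · ring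

lemma aux_pPay_BR (hβ : β ≠ 0) (μ : ∀ i, S i → ℝ) (i : V) [Nonempty (S i)] :
    pPay E A β μ i (BR E A β μ i)
      = (1 / β) * Real.log (∑ s' : S i, Real.exp (β * payoffTo E A μ i s')) := by
  unfold pPay
  rw [aux_swap]
  unfold vEnt
  simp only [aux_logBR E A β μ i]
  have h1 : ∑ s, BR E A β μ i s *
      (β * payoffTo E A μ i s
        - Real.log (∑ s' : S i, Real.exp (β * payoffTo E A μ i s')))
      = β * ∑ s, BR E A β μ i s * payoffTo E A μ i s
        - Real.log (∑ s' : S i, Real.exp (β * payoffTo E A μ i s'))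
          * ∑ s, BR E A β μ i s := by
    rw [Finset.mul_sum, Finset.mul_sum, ← Finset.sum_sub_distrib]
    exact Finset.sum_congr rfl fun s _ => by ring
  rw [h1, aux_BRsum]
  field_simp
  ring

lemma aux_bilin_expand (x y : ∀ i, S i → ℝ) (i j : V) :
    bilin A (fun k s => x k s - y k s) (fun k s => x k s - y k s) i j
      = bilin A x x i j - bilin A x y i j - bilin A y x i j + bilin A y y i j := by
  unfold bilin
  simp only [← Finset.sum_sub_distrib, ← Finset.sum_add_distrib]
  refine Finset.sum_congr rfl fun s _ => Finset.sum_congr rfl fun s' _ => by ring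

lemma aux_bilin_mid (x y : ∀ i, S i → ℝ) (i j : V) :
    bilin A x x i j + bilin A x y i j + bilin A y x i j + bilin A y y i j
      = 4 * bilin A (fun k s => (x k s + y k s) / 2) (fun k s => (x k s + y k s) / 2) i j := by
  unfold bilin
  simp only [Finset.mul_sum, ← Finset.sum_add_distrib]
  refine Finset.sum_congr rfl fun s _ => Finset.sum_congr rfl fun s' _ => by ring

lemma aux_zeroSum_diff (ω : V → ℝ) (hzs : weightedZeroSum E A ω)
    (x y : ∀ i, S i → ℝ) (hx : inProd x) (hy : inProd y) :
    ∑ i, ω i * ∑ j, (if E i j then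
      bilin A (fun k s => x k s - y k s) (fun k s => x k s - y k s) i j else 0) = 0 := by
  have hmid : inProd (fun k s => (x k s + y k s) / 2) := by
    intro k
    constructor
    · intro s; have := (hx k).1 s; have := (hy k).1 s; positivity
    · rw [← Finset.sum_div, Finset.sum_add_distrib, (hx k).2, (hy k).2]; norm_num
  have h1 := hzs x hx
  have h2 := hzs y hy
  have h3 := hzs _ hmid
  simp only [aux_bilin_expand]
  have key : ∀ i, ω i * ∑ j, (if E i j then
      bilin A x x i j - bilin A x y i j - bilin A y x i j + bilin A y y i j else 0)
    = ω i * ∑ j, (if E i j then bilin A x x i j else 0)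
      + ω i * ∑ j, (if E i j then bilin A y y i j else 0)
      - (4 * (ω i * ∑ j, (if E i j then
          bilin A (fun k s => (x k s + y k s) / 2) (fun k s => (x k s + y k s) / 2) i j else 0))
        - ω i * ∑ j, (if E i j then bilin A x x i j else 0)
        - ω i * ∑ j, (if E i j then bilin A y y i j else 0)) := by
    intro i
    simp only [Finset.mul_sum, ← Finset.sum_add_distrib, ← Finset.sum_sub_distrib]
    refine Finset.sum_congr rfl fun j _ => ?_
    have := aux_bilin_mid A x y i j
    split_ifs <;> [skip; ring]
    linear_combination (-(ω i)) * this
  simp only [key, Finset.sum_add_distrib, Finset.sum_sub_distrib, ← Finset.mul_sum]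
  rw [h1, h2, h3]
  ring

lemma aux_zero_payoff (ω : V → ℝ) (hzs : weightedZeroSum E A ω)
    (x y : ∀ i, S i → ℝ) (hx : inProd x) (hy : inProd y) :
    ∑ i, ω i * ∑ s, (x i s - y i s) *
      payoffTo E A (fun k s => x k s - y k s) i s = 0 := by
  rw [← aux_zeroSum_diff E A ω hzs x y hx hy]
  refine Finset.sum_congr rfl fun i _ => ?_
  congr 1
  exact (aux_swap E A (fun k s => x k s - y k s) (fun k s => x k s - y k s) i).symm

end AuxLemmas

lemma aux_sign {a b : ℝ} (ha : 0 < a) (hb : 0 < b) :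
    0 ≤ (Real.log a - Real.log b) * (a - b) := by
  rcases le_total a b with h | h
  · have hl : Real.log a ≤ Real.log b := Real.log_le_log ha h
    rw [← neg_mul_neg]
    exact mul_nonneg (by linarith) (by linarith)
  · have hl : Real.log b ≤ Real.log a := Real.log_le_log hb h
    exact mul_nonneg (by linarith) (by linarith)

lemma aux_sign_eq {a b : ℝ} (ha : 0 < a) (hb : 0 < b)
    (h : (Real.log a - Real.log b) * (a - b) = 0) : a = b := by
  by_contra hne
  rcases lt_or_gt_of_ne hne with hlt | hgt
  · have hl : Real.log a < Real.log b := Real.log_lt_log ha hlt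
    have h2 : 0 < (Real.log a - Real.log b) * (a - b) :=
      mul_pos_of_neg_of_neg (by linarith) (by linarith)
    linarith
  · have hl : Real.log b < Real.log a := Real.log_lt_log hb hgt
    have h2 : 0 < (Real.log a - Real.log b) * (a - b) :=
      mul_pos (by linarith) (by linarith)
    linarith

/-- along interior solutions of the homogeneous belief dynamics in a
weighted zero-sum game, the Lyapunov function `L` has derivative
`-(1/β) Σ_i ω_i Σ_s (ln x_i(s) - ln μ_i(s))·(x_i(s) - μ_i(s)) ≤ 0` (with
`x = BR(μ(τ))`), vanishing exactly at QRE points; in particular `L∘μ` is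
nonincreasing. -/
theorem lyapunov_derivative_nonpos_of_weightedZeroSum
    {V : Type*} [Fintype V] [Nonempty V] [DecidableEq V]
    {S : V → Type*} [∀ i, Fintype (S i)] [∀ i, Nonempty (S i)] [∀ i, DecidableEq (S i)]
    (E : V → V → Prop) [DecidableRel E]
    (hE_symm : ∀ i j, E i j → E j i) (hE_irrefl : ∀ i, ¬ E i i)
    (A : ∀ i j, S i → S j → ℝ)
    (ω : V → ℝ) (hω : ∀ i, 0 < ω i) (hzs : weightedZeroSum E A ω)
    (β : ℝ) (hβ : 0 < β)
    (μ : ℝ → ∀ i, S i → ℝ)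
    (hμΔ : ∀ τ ≥ (0 : ℝ), inProd (μ τ) ∧ ∀ i s, 0 < μ τ i s)
    (hode : ∀ τ ≥ (0 : ℝ),
      HasDerivAt μ (fun i s => BR E A β (μ τ) i s - μ τ i s) τ) :
    (∀ τ ≥ (0 : ℝ),
      HasDerivAt
        (fun t => ∑ i, ω i *
          (pPay E A β (μ t) i (BR E A β (μ t) i) - pPay E A β (μ t) i (μ t i)))
        (-(1 / β) * ∑ i, ω i * ∑ s,
          (Real.log (BR E A β (μ τ) i s) - Real.log (μ τ i s)) *
            (BR E A β (μ τ) i s - μ τ i s)) τ ∧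
      (-(1 / β) * ∑ i, ω i * ∑ s,
          (Real.log (BR E A β (μ τ) i s) - Real.log (μ τ i s)) *
            (BR E A β (μ τ) i s - μ τ i s)) ≤ 0 ∧
      ((-(1 / β) * ∑ i, ω i * ∑ s,
          (Real.log (BR E A β (μ τ) i s) - Real.log (μ τ i s)) *
            (BR E A β (μ τ) i s - μ τ i s)) = 0 ↔
        ∀ i, BR E A β (μ τ) i = μ τ i)) ∧
    AntitoneOn
      (fun t => ∑ i, ω i *
        (pPay E A β (μ t) i (BR E A β (μ t) i) - pPay E A β (μ t) i (μ t i)))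
      (Set.Ici (0 : ℝ)) := by
  have hβ' : (β : ℝ) ≠ 0 := ne_of_gt hβ
  have key : ∀ τ ≥ (0 : ℝ),
      HasDerivAt
        (fun t => ∑ i, ω i *
          (pPay E A β (μ t) i (BR E A β (μ t) i) - pPay E A β (μ t) i (μ t i)))
        (-(1 / β) * ∑ i, ω i * ∑ s,
          (Real.log (BR E A β (μ τ) i s) - Real.log (μ τ i s)) *
            (BR E A β (μ τ) i s - μ τ i s)) τ := by
    intro τ hτ
    have hodeτ := hode τ hτ
    set m := μ τ with hm
    obtain ⟨D, hDdef⟩ : ∃ D : ∀ i, S i → ℝ,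
        D = fun i s => BR E A β m i s - m i s := ⟨_, rfl⟩
    rw [← hDdef] at hodeτ
    have hev : ∀ j s', HasDerivAt (fun t => μ t j s') (D j s') τ := fun j s' =>
      hasDerivAt_pi.mp (hasDerivAt_pi.mp hodeτ j) s'
    have hmpos : ∀ i s, 0 < m i s := fun i s => (hμΔ τ hτ).2 i s
    have hmΔ : inProd m := (hμΔ τ hτ).1
    have hxΔ : inProd (BR E A β m) := fun i =>
      ⟨fun s => (aux_BRpos E A β m i s).le, aux_BRsum E A β m i⟩
    have hDsum : ∀ i, ∑ s, D i s = 0 := by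
      intro i
      simp only [hDdef]
      rw [Finset.sum_sub_distrib, aux_BRsum E A β m i, (hmΔ i).2, sub_self]
    have hu : ∀ i s, HasDerivAt (fun t => payoffTo E A (μ t) i s)
        (payoffTo E A D i s) τ := by
      intro i s
      unfold payoffTo
      refine HasDerivAt.fun_sum fun j _ => ?_
      by_cases h : E i j
      · simp only [if_pos h]
        exact HasDerivAt.fun_sum fun s' _ => (hev j s').const_mul _
      · simp only [if_neg h]; exact hasDerivAt_const _ _
    have hF : ∀ i, HasDerivAt
        (fun t => (1 / β) * Real.log (∑ s' : S i, Real.exp (β * payoffTo E A (μ t) i s')))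
        ((1 / β) * ((∑ s' : S i, Real.exp (β * payoffTo E A m i s') *
            (β * payoffTo E A D i s')) /
          (∑ s' : S i, Real.exp (β * payoffTo E A m i s')))) τ := by
      intro i
      refine HasDerivAt.const_mul _ ?_
      refine HasDerivAt.log ?_ (aux_Zpos E A β m i).ne'
      exact HasDerivAt.fun_sum fun s' _ => ((hu i s').const_mul β).exp
    have hG : ∀ i, HasDerivAt
        (fun t => (∑ j, if E i j then
              ∑ s : S i, ∑ s' : S j, μ t i s * A i j s s' * μ t j s' else 0)
            + (-(1 / β) * ∑ s, μ t i s * Real.log (μ t i s)))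
        ((∑ j, if E i j then ∑ s : S i, ∑ s' : S j,
              (D i s * A i j s s' * m j s' + m i s * A i j s s' * D j s') else 0)
          + (-(1 / β) * ∑ s, (D i s * Real.log (m i s) + m i s * (D i s / m i s)))) τ := by
      intro i
      refine HasDerivAt.add ?_ ?_
      · refine HasDerivAt.fun_sum fun j _ => ?_
        by_cases h : E i j
        · simp only [if_pos h]
          exact HasDerivAt.fun_sum fun s _ => HasDerivAt.fun_sum fun s' _ =>
            ((hev i s).mul_const (A i j s s')).mul (hev j s')
        · simp only [if_neg h]; exact hasDerivAt_const _ _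
      · refine HasDerivAt.const_mul _ (HasDerivAt.fun_sum fun s _ => ?_)
        exact (hev i s).mul ((hev i s).log (hmpos i s).ne')
    have funL : (fun t => ∑ i, ω i *
          (pPay E A β (μ t) i (BR E A β (μ t) i) - pPay E A β (μ t) i (μ t i)))
        = (fun t => ∑ i, ω i *
            ((1 / β) * Real.log (∑ s' : S i, Real.exp (β * payoffTo E A (μ t) i s'))
              - ((∑ j, if E i j then
                    ∑ s : S i, ∑ s' : S j, μ t i s * A i j s s' * μ t j s' else 0)
                + (-(1 / β) * ∑ s, μ t i s * Real.log (μ t i s))))) := by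
      funext t
      refine Finset.sum_congr rfl fun i _ => ?_
      rw [aux_pPay_BR E A β hβ' (μ t) i]
      rfl
    rw [funL]
    have hL : HasDerivAt
        (fun t => ∑ i, ω i *
            ((1 / β) * Real.log (∑ s' : S i, Real.exp (β * payoffTo E A (μ t) i s'))
              - ((∑ j, if E i j then
                    ∑ s : S i, ∑ s' : S j, μ t i s * A i j s s' * μ t j s' else 0)
                + (-(1 / β) * ∑ s, μ t i s * Real.log (μ t i s)))))
        (∑ i, ω i *
        ((1 / β) * ((∑ s' : S i, Real.exp (β * payoffTo E A m i s') *
            (β * payoffTo E A D i s')) /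
          (∑ s' : S i, Real.exp (β * payoffTo E A m i s')))
        - ((∑ j, if E i j then ∑ s : S i, ∑ s' : S j,
              (D i s * A i j s s' * m j s' + m i s * A i j s s' * D j s') else 0)
          + (-(1 / β) * ∑ s, (D i s * Real.log (m i s) + m i s * (D i s / m i s)))))) τ :=
      HasDerivAt.fun_sum fun i _ => HasDerivAt.const_mul (ω i) ((hF i).sub (hG i))
    have ha : ∀ i, (1 / β) * ((∑ s' : S i, Real.exp (β * payoffTo E A m i s') *
            (β * payoffTo E A D i s')) /
          (∑ s' : S i, Real.exp (β * payoffTo E A m i s')))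
        = ∑ s, BR E A β m i s * payoffTo E A D i s := by
      intro i
      unfold BR
      rw [Finset.sum_div, Finset.mul_sum]
      refine Finset.sum_congr rfl fun s _ => ?_
      have hZ := (aux_Zpos E A β m i).ne'
      field_simp
    have hb : ∀ i, (∑ j, if E i j then ∑ s : S i, ∑ s' : S j,
          (D i s * A i j s s' * m j s' + m i s * A i j s s' * D j s') else 0)
        = (∑ s, D i s * payoffTo E A m i s) + ∑ s, m i s * payoffTo E A D i s := by
      intro i
      rw [← aux_swap E A D m i, ← aux_swap E A m D i, ← Finset.sum_add_distrib]
      refine Finset.sum_congr rfl fun j _ => ?_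
      split_ifs
      · rw [← Finset.sum_add_distrib]
        refine Finset.sum_congr rfl fun s _ => ?_
        rw [← Finset.sum_add_distrib]
      · norm_num
    have he : ∀ i, ∑ s, D i s * Real.log (BR E A β m i s)
        = β * ∑ s, D i s * payoffTo E A m i s := by
      intro i
      simp only [aux_logBR E A β m i]
      have h2 : ∀ s : S i, D i s * (β * payoffTo E A m i s
            - Real.log (∑ s' : S i, Real.exp (β * payoffTo E A m i s')))
          = β * (D i s * payoffTo E A m i s)
            - Real.log (∑ s' : S i, Real.exp (β * payoffTo E A m i s')) * D i s :=
        fun s => by ring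
      simp only [h2]
      rw [Finset.sum_sub_distrib, ← Finset.mul_sum, ← Finset.mul_sum, hDsum i,
        mul_zero, sub_zero]
    have hzero : ∑ i, ω i * ∑ s, D i s * payoffTo E A D i s = 0 := by
      simp only [hDdef]
      exact aux_zero_payoff E A ω hzs (BR E A β m) m hxΔ hmΔ
    have claim : ∀ i, ω i *
          ((1 / β) * ((∑ s' : S i, Real.exp (β * payoffTo E A m i s') *
              (β * payoffTo E A D i s')) /
            (∑ s' : S i, Real.exp (β * payoffTo E A m i s')))
          - ((∑ j, if E i j then ∑ s : S i, ∑ s' : S j,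
                (D i s * A i j s s' * m j s' + m i s * A i j s s' * D j s') else 0)
            + (-(1 / β) * ∑ s, (D i s * Real.log (m i s) + m i s * (D i s / m i s)))))
        = ω i * (∑ s, D i s * payoffTo E A D i s)
          + ω i * (-(1 / β) * ∑ s,
              (Real.log (BR E A β m i s) - Real.log (m i s)) * D i s) := by
      intro i
      rw [ha i, hb i]
      have hent : ∑ s, (D i s * Real.log (m i s) + m i s * (D i s / m i s))
          = ∑ s, D i s * Real.log (m i s) := by
        rw [Finset.sum_add_distrib]
        have h3 : ∑ s, m i s * (D i s / m i s) = ∑ s, D i s :=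
          Finset.sum_congr rfl fun s _ => by
            rw [mul_comm, div_mul_cancel₀ _ (hmpos i s).ne']
        rw [h3, hDsum i, add_zero]
      rw [hent]
      have hxd : ∑ s, BR E A β m i s * payoffTo E A D i s
          = ∑ s, D i s * payoffTo E A D i s + ∑ s, m i s * payoffTo E A D i s := by
        rw [← Finset.sum_add_distrib]
        refine Finset.sum_congr rfl fun s _ => ?_
        simp only [hDdef]
        ring
      have hlogs : ∑ s, (Real.log (BR E A β m i s) - Real.log (m i s)) * D i s
          = ∑ s, D i s * Real.log (BR E A β m i s)
            - ∑ s, D i s * Real.log (m i s) := by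
        rw [← Finset.sum_sub_distrib]
        exact Finset.sum_congr rfl fun s _ => by ring
      rw [hxd, hlogs, he i]
      field_simp
      ring
    have hval : (∑ i, ω i *
        ((1 / β) * ((∑ s' : S i, Real.exp (β * payoffTo E A m i s') *
            (β * payoffTo E A D i s')) /
          (∑ s' : S i, Real.exp (β * payoffTo E A m i s')))
        - ((∑ j, if E i j then ∑ s : S i, ∑ s' : S j,
              (D i s * A i j s s' * m j s' + m i s * A i j s s' * D j s') else 0)
          + (-(1 / β) * ∑ s, (D i s * Real.log (m i s) + m i s * (D i s / m i s))))))
        = -(1 / β) * ∑ i, ω i * ∑ s,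
            (Real.log (BR E A β m i s) - Real.log (m i s)) *
              (BR E A β m i s - m i s) := by
      calc _ = ∑ i, (ω i * (∑ s, D i s * payoffTo E A D i s)
            + ω i * (-(1 / β) * ∑ s,
                (Real.log (BR E A β m i s) - Real.log (m i s)) * D i s)) :=
              Finset.sum_congr rfl fun i _ => claim i
        _ = (∑ i, ω i * ∑ s, D i s * payoffTo E A D i s)
            + ∑ i, ω i * (-(1 / β) * ∑ s,
                (Real.log (BR E A β m i s) - Real.log (m i s)) * D i s) :=
              Finset.sum_add_distrib
        _ = ∑ i, ω i * (-(1 / β) * ∑ s,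
                (Real.log (BR E A β m i s) - Real.log (m i s)) * D i s) := by
              rw [hzero, zero_add]
        _ = -(1 / β) * ∑ i, ω i * ∑ s,
              (Real.log (BR E A β m i s) - Real.log (m i s)) *
                (BR E A β m i s - m i s) := by
              rw [Finset.mul_sum]
              refine Finset.sum_congr rfl fun i _ => ?_
              simp only [hDdef]
              ring
    exact hval ▸ hL
  have hsign : ∀ τ ≥ (0 : ℝ), (0 : ℝ) ≤ ∑ i, ω i * ∑ s,
      (Real.log (BR E A β (μ τ) i s) - Real.log (μ τ i s)) *
        (BR E A β (μ τ) i s - μ τ i s) := by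
    intro τ hτ
    refine Finset.sum_nonneg fun i _ => mul_nonneg (hω i).le
      (Finset.sum_nonneg fun s _ =>
        aux_sign (aux_BRpos E A β (μ τ) i s) ((hμΔ τ hτ).2 i s))
  have hnonpos : ∀ τ ≥ (0 : ℝ),
      (-(1 / β) * ∑ i, ω i * ∑ s,
          (Real.log (BR E A β (μ τ) i s) - Real.log (μ τ i s)) *
            (BR E A β (μ τ) i s - μ τ i s)) ≤ 0 := by
    intro τ hτ
    rw [neg_mul]
    exact neg_nonpos.mpr (mul_nonneg (by positivity) (hsign τ hτ))
  constructor
  · intro τ hτ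
    refine ⟨key τ hτ, hnonpos τ hτ, ?_⟩
    constructor
    · intro h0
      have hβ2 : (1 / β : ℝ) ≠ 0 := by positivity
      rw [neg_mul, neg_eq_zero, mul_eq_zero] at h0
      have hS0 := h0.resolve_left hβ2
      have hterm := (Finset.sum_eq_zero_iff_of_nonneg fun i _ =>
        mul_nonneg (hω i).le (Finset.sum_nonneg fun s _ =>
          aux_sign (aux_BRpos E A β (μ τ) i s) ((hμΔ τ hτ).2 i s))).mp hS0
      intro i
      funext s
      have hi := hterm i (Finset.mem_univ i)
      have hSi : ∑ s, (Real.log (BR E A β (μ τ) i s) - Real.log (μ τ i s)) *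
          (BR E A β (μ τ) i s - μ τ i s) = 0 := by
        rcases mul_eq_zero.mp hi with h | h
        · exact absurd h (hω i).ne'
        · exact h
      have hs := (Finset.sum_eq_zero_iff_of_nonneg fun s _ =>
        aux_sign (aux_BRpos E A β (μ τ) i s) ((hμΔ τ hτ).2 i s)).mp hSi s
        (Finset.mem_univ s)
      exact aux_sign_eq (aux_BRpos E A β (μ τ) i s) ((hμΔ τ hτ).2 i s) hs
    · intro h
      have hz : ∀ i s, BR E A β (μ τ) i s - μ τ i s = 0 := by
        intro i s
        rw [h i]
        ring
      simp only [hz, mul_zero, Finset.sum_const_zero]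
  · refine antitoneOn_of_deriv_nonpos (convex_Ici 0) ?_ ?_ ?_
    · exact fun t ht => (key t ht).continuousAt.continuousWithinAt
    · rw [interior_Ici]
      exact fun t ht => (key t (le_of_lt ht)).differentiableAt.differentiableWithinAt
    · intro t ht
      rw [interior_Ici] at ht
      rw [(key t ht.le).deriv]
      exact hnonpos t ht.le
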